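/- Fix γ with 0 < γ ≤ 1/3. Then lim_{ε→0⁺} ∫_{x₃=0}^{1} ∫_{r=0}^{ε} (1/r)·(u_ρ^ε(r, x₃)·sin f_ε(r))² dr dx₃ = 1/2. -/

import Mathlib

set_option maxHeartbeats 1000000

open MeasureTheory Filter Topology Real

/-- The zenith-angle function `f_ε(r) = arctan(r/ε²) + (arctan ε)·r/ε`. -/
noncomputable def fe (ε r : ℝ) : ℝ := Real.arctan (r / ε ^ 2) + Real.arctan ε * r / ε

/-- Its derivative `f_ε'(r) = ε²/(ε⁴ + r²) + (arctan ε)/ε`. -/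
noncomputable def fder (ε r : ℝ) : ℝ := ε ^ 2 / (ε ^ 4 + r ^ 2) + Real.arctan ε / ε

/-- The radial component of the recovery sequence in region `c_ε`:
`u_ρ^ε(r, x₃) = ((cos f_ε(r) + 2ε^γ)³ + 3·x₃·r/(sin(f_ε(r))·f_ε'(r)))^{1/3}`. -/
noncomputable def urho (γ ε r x : ℝ) : ℝ :=
  ((Real.cos (fe ε r) + 2 * ε ^ γ) ^ 3
      + 3 * x * r / (Real.sin (fe ε r) * fder ε r)) ^ ((1 : ℝ) / 3)


lemma my_arctan_le {x : ℝ} (hx : 0 ≤ x) : Real.arctan x ≤ x := by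
  rcases eq_or_lt_of_le hx with h | h
  · simp [← h]
  · have h1 : 0 < Real.arctan x := by
      rw [← Real.arctan_zero]; exact Real.arctan_strictMono h
    have h2 : Real.arctan x < π / 2 := Real.arctan_lt_pi_div_two x
    have := Real.lt_tan h1 h2
    rw [Real.tan_arctan] at this
    exact this.le

lemma my_arctan_ge {x : ℝ} (hx0 : 0 ≤ x) (hx1 : x ≤ 1) : x / 2 ≤ Real.arctan x := by
  have hnn : 0 ≤ Real.arctan x := by
    rw [← Real.arctan_zero]; exact Real.arctan_strictMono.monotone hx0
  have h1 : Real.sin (Real.arctan x) ≤ Real.arctan x := Real.sin_le hnn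
  rw [Real.sin_arctan] at h1
  have h2 : Real.sqrt (1 + x ^ 2) ≤ 2 := by
    rw [show (2:ℝ) = Real.sqrt 4 by rw [show (4:ℝ) = 2^2 by norm_num, Real.sqrt_sq]; norm_num]
    apply Real.sqrt_le_sqrt; nlinarith
  have h3 : (0:ℝ) < Real.sqrt (1 + x ^ 2) := Real.sqrt_pos.2 (by positivity)
  calc x / 2 ≤ x / Real.sqrt (1 + x ^ 2) := by
        apply div_le_div_of_nonneg_left hx0 h3 h2
      _ ≤ Real.arctan x := h1

lemma my_abs_sin_sub (a b : ℝ) : |Real.sin a - Real.sin b| ≤ |a - b| := by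
  rw [Real.sin_sub_sin]
  calc |2 * Real.sin ((a - b) / 2) * Real.cos ((a + b) / 2)|
      = 2 * |Real.sin ((a - b) / 2)| * |Real.cos ((a + b) / 2)| := by
        rw [abs_mul, abs_mul]; norm_num
    _ ≤ 2 * |(a - b) / 2| * 1 := by
        apply mul_le_mul (by linarith [Real.abs_sin_le_abs (x := (a-b)/2)])
          (Real.abs_cos_le_one _) (abs_nonneg _) (by positivity)
    _ = |a - b| := by rw [abs_div, abs_two]; ring

lemma my_abs_cos_sub (a b : ℝ) : |Real.cos a - Real.cos b| ≤ |a - b| := by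
  rw [Real.cos_sub_cos]
  calc |-2 * Real.sin ((a + b) / 2) * Real.sin ((a - b) / 2)|
      = 2 * |Real.sin ((a + b) / 2)| * |Real.sin ((a - b) / 2)| := by
        rw [abs_mul, abs_mul, abs_neg]; norm_num
    _ ≤ 2 * 1 * |(a - b) / 2| := by
        apply mul_le_mul (by nlinarith [Real.abs_sin_le_one ((a+b)/2)])
          (Real.abs_sin_le_abs (x := (a-b)/2)) (abs_nonneg _) (by positivity)
    _ = |a - b| := by rw [abs_div, abs_two]; ring

lemma prod_sq_lip (a b : ℝ) :
    |Real.sin a ^ 2 * Real.cos a ^ 2 - Real.sin b ^ 2 * Real.cos b ^ 2| ≤ 4 * |a - b| := by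
  have hs := my_abs_sin_sub a b
  have hc := my_abs_cos_sub a b
  have h1 : |Real.sin a| ≤ 1 := Real.abs_sin_le_one a
  have h2 : |Real.sin b| ≤ 1 := Real.abs_sin_le_one b
  have h3 : |Real.cos a| ≤ 1 := Real.abs_cos_le_one a
  have h4 : |Real.cos b| ≤ 1 := Real.abs_cos_le_one b
  calc |Real.sin a ^ 2 * Real.cos a ^ 2 - Real.sin b ^ 2 * Real.cos b ^ 2|
      = |(Real.sin a - Real.sin b) * ((Real.sin a + Real.sin b) * Real.cos a ^ 2)
          + (Real.cos a - Real.cos b) * ((Real.cos a + Real.cos b) * Real.sin b ^ 2)| := by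
        ring_nf
    _ ≤ |(Real.sin a - Real.sin b) * ((Real.sin a + Real.sin b) * Real.cos a ^ 2)|
          + |(Real.cos a - Real.cos b) * ((Real.cos a + Real.cos b) * Real.sin b ^ 2)| :=
        abs_add_le _ _
    _ ≤ |a - b| * 2 + |a - b| * 2 := by
        gcongr
        · rw [abs_mul]
          apply mul_le_mul hs ?_ (abs_nonneg _) (abs_nonneg _)
          rw [abs_mul]
          calc |Real.sin a + Real.sin b| * |Real.cos a ^ 2| ≤ 2 * 1 := by
                apply mul_le_mul
                  (by rcases abs_le.mp h1 with ⟨l1, r1⟩; rcases abs_le.mp h2 with ⟨l2, r2⟩;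
                      rw [abs_le]; constructor <;> linarith)
                  (by rw [abs_pow]; exact pow_le_one₀ (abs_nonneg _) h3) (abs_nonneg _) (by norm_num)
            _ = 2 := by norm_num
        · rw [abs_mul]
          apply mul_le_mul hc ?_ (abs_nonneg _) (abs_nonneg _)
          rw [abs_mul]
          calc |Real.cos a + Real.cos b| * |Real.sin b ^ 2| ≤ 2 * 1 := by
                apply mul_le_mul
                  (by rcases abs_le.mp h3 with ⟨l1, r1⟩; rcases abs_le.mp h4 with ⟨l2, r2⟩;
                      rw [abs_le]; constructor <;> linarith)
                  (by rw [abs_pow]; exact pow_le_one₀ (abs_nonneg _) h2) (abs_nonneg _) (by norm_num)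
            _ = 2 := by norm_num
    _ = 4 * |a - b| := by ring

lemma my_rpow_subadd {x y p : ℝ} (hx : 0 ≤ x) (hy : 0 ≤ y) (hp0 : 0 ≤ p) (hp1 : p ≤ 1) :
    (x + y) ^ p ≤ x ^ p + y ^ p := by
  have h := NNReal.rpow_add_le_add_rpow x.toNNReal y.toNNReal hp0 hp1
  have h2 := NNReal.coe_le_coe.2 h
  push_cast [NNReal.coe_rpow] at h2
  rwa [Real.coe_toNNReal x hx, Real.coe_toNNReal y hy] at h2




section FeFacts
variable {ε r : ℝ} (hε0 : 0 < ε) (hε1 : ε ≤ 1) (hr0 : 0 < r) (hrε : r ≤ ε)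

include hε0 hr0 in
lemma fe_pos : 0 < fe ε r := by
  have h1 : 0 < Real.arctan (r / ε ^ 2) := by
    rw [← Real.arctan_zero]; exact Real.arctan_strictMono (by positivity)
  have h2 : 0 < Real.arctan ε := by
    rw [← Real.arctan_zero]; exact Real.arctan_strictMono hε0
  have : 0 < Real.arctan ε * r / ε := by positivity
  unfold fe; linarith

include hε0 hr0 hrε in
lemma fe_le : fe ε r ≤ π / 2 := by
  have h1 : Real.arctan (r / ε ^ 2) ≤ Real.arctan ε⁻¹ := by
    apply Real.arctan_strictMono.monotone
    rw [div_le_iff₀ (by positivity)]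
    rw [inv_mul_eq_div, le_div_iff₀ hε0] at *
    nlinarith
  have h2 : Real.arctan ε * r / ε ≤ Real.arctan ε := by
    have h2' : 0 ≤ Real.arctan ε := by
      rw [← Real.arctan_zero]; exact Real.arctan_strictMono.monotone hε0.le
    rw [mul_div_assoc]
    nth_rewrite 2 [← mul_one (Real.arctan ε)]
    apply mul_le_mul_of_nonneg_left _ h2'
    rw [div_le_one hε0]; exact hrε
  have h3 := Real.arctan_inv_of_pos hε0
  unfold fe; linarith

include hε0 hr0 hrε in
lemma sin_fe_pos : 0 < Real.sin (fe ε r) := by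
  apply Real.sin_pos_of_pos_of_lt_pi (fe_pos hε0 hr0)
  have := fe_le hε0 hr0 hrε
  have := Real.pi_pos
  linarith

include hε0 hr0 hrε in
lemma cos_fe_nonneg : 0 ≤ Real.cos (fe ε r) := by
  apply Real.cos_nonneg_of_mem_Icc
  constructor
  · have := fe_pos hε0 hr0; have := Real.pi_pos; linarith
  · exact fe_le hε0 hr0 hrε

include hε0 hε1 hr0 in
lemma sin_fe_le : Real.sin (fe ε r) ≤ r * (1 / ε ^ 2 + 1) := by
  have h0 : 0 < fe ε r := fe_pos hε0 hr0
  have h1 : Real.sin (fe ε r) ≤ fe ε r := Real.sin_le h0.le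
  have h2 : Real.arctan (r / ε ^ 2) ≤ r / ε ^ 2 := my_arctan_le (by positivity)
  have h3 : Real.arctan ε * r / ε ≤ r := by
    have := my_arctan_le hε0.le
    rw [div_le_iff₀ hε0]
    nth_rewrite 2 [mul_comm]
    apply mul_le_mul_of_nonneg_right this hr0.le
  unfold fe at *
  have : r / ε ^ 2 = r * (1/ε^2) := by ring
  nlinarith

include hε0 hε1 in
lemma fder_ge : 1 / 2 ≤ fder ε r := by
  have h1 : (0:ℝ) ≤ ε ^ 2 / (ε ^ 4 + r ^ 2) := by positivity
  have h2 : ε / 2 ≤ Real.arctan ε := my_arctan_ge hε0.le hε1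
  have h3 : 1 / 2 ≤ Real.arctan ε / ε := by
    rw [le_div_iff₀ hε0]; linarith
  unfold fder; linarith

include hε0 hr0 in
lemma fe_sub_arctan : fe ε r - Real.arctan (r / ε ^ 2) ∈ Set.Icc 0 r := by
  have h2' : 0 ≤ Real.arctan ε := by
    rw [← Real.arctan_zero]; exact Real.arctan_strictMono.monotone hε0.le
  have h3 : Real.arctan ε * r / ε ≤ r := by
    have := my_arctan_le hε0.le
    rw [div_le_iff₀ hε0]
    nth_rewrite 2 [mul_comm]
    apply mul_le_mul_of_nonneg_right this hr0.le
  constructor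
  · unfold fe; simp only [add_sub_cancel_left]; positivity
  · unfold fe; simp only [add_sub_cancel_left]; exact h3

end FeFacts


lemma phi_cont (ε : ℝ) (hε0 : 0 < ε) :
    Continuous (fun r : ℝ => r * ε ^ 4 / (ε ^ 4 + r ^ 2) ^ 2) := by
  apply Continuous.div (by fun_prop) (by fun_prop)
  intro x; positivity

lemma integral_phi (ε : ℝ) (hε0 : 0 < ε) :
    ∫ r in Set.Ioo (0:ℝ) ε, r * ε ^ 4 / (ε ^ 4 + r ^ 2) ^ 2
      = 1 / 2 - ε ^ 2 / (2 * (ε ^ 2 + 1)) := by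
  rw [← MeasureTheory.integral_Ioc_eq_integral_Ioo,
    ← intervalIntegral.integral_of_le hε0.le]
  have key : ∀ x ∈ Set.uIcc (0:ℝ) ε,
      HasDerivAt (fun r : ℝ => -(ε^4) / 2 * (ε ^ 4 + r ^ 2)⁻¹)
        (x * ε ^ 4 / (ε ^ 4 + x ^ 2) ^ 2) x := by
    intro x _
    have hne : ε ^ 4 + x ^ 2 ≠ 0 := by positivity
    have hd : HasDerivAt (fun r : ℝ => ε ^ 4 + r ^ 2) (2 * x) x := by
      simpa using (hasDerivAt_pow 2 x).const_add (ε ^ 4)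
    have := (hd.inv hne).const_mul (-(ε^4) / 2)
    rw [show x * ε ^ 4 / (ε ^ 4 + x ^ 2) ^ 2 = -(ε^4) / 2 * (-(2 * x) / (ε ^ 4 + x ^ 2) ^ 2) by ring]
    exact this
  rw [intervalIntegral.integral_eq_sub_of_hasDerivAt key
    ((phi_cont ε hε0).continuousOn.intervalIntegrable)]
  have h1 : ε ^ 4 + ε ^ 2 ≠ 0 := by positivity
  have h2 : (ε:ℝ) ^ 4 ≠ 0 := by positivity
  field_simp
  ring

lemma integral_rpow_Ioo {p : ℝ} (hp : -1 < p) {ε : ℝ} (hε0 : 0 < ε) :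
    ∫ r in Set.Ioo (0:ℝ) ε, r ^ p = ε ^ (p + 1) / (p + 1) := by
  rw [← MeasureTheory.integral_Ioc_eq_integral_Ioo,
    ← intervalIntegral.integral_of_le hε0.le, integral_rpow (Or.inl hp),
    Real.zero_rpow (by linarith)]
  ring

lemma integrable_rpow_Ioo {p : ℝ} (hp : -1 < p) {ε : ℝ} (hε0 : 0 < ε) :
    IntegrableOn (fun r : ℝ => r ^ p) (Set.Ioo (0:ℝ) ε) := by
  have h := intervalIntegral.intervalIntegrable_rpow' (a := 0) (b := ε) hp
  rw [intervalIntegrable_iff_integrableOn_Ioc_of_le hε0.le] at h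
  exact h.mono_set Set.Ioo_subset_Ioc_self

lemma phi_eq_trig {ε r : ℝ} (hε0 : 0 < ε) (hr0 : 0 < r) :
    Real.sin (Real.arctan (r / ε ^ 2)) ^ 2 * Real.cos (Real.arctan (r / ε ^ 2)) ^ 2 / r
      = r * ε ^ 4 / (ε ^ 4 + r ^ 2) ^ 2 := by
  rw [Real.sin_arctan, Real.cos_arctan]
  have h1 : (0:ℝ) < 1 + (r / ε ^ 2) ^ 2 := by positivity
  have h2 : Real.sqrt (1 + (r / ε ^ 2) ^ 2) ^ 2 = 1 + (r / ε ^ 2) ^ 2 :=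
    Real.sq_sqrt h1.le
  have h3 : Real.sqrt (1 + (r / ε ^ 2) ^ 2) ≠ 0 := by
    positivity
  rw [div_pow (r / ε ^ 2), div_pow 1, h2]
  field_simp




lemma pow3_rpow {c : ℝ} (hc : 0 ≤ c) : (c ^ 3) ^ ((2:ℝ)/3) = c ^ 2 := by
  rw [← Real.rpow_natCast c 3, ← Real.rpow_mul hc, ← Real.rpow_natCast c 2]
  norm_num

section Pointwise
variable {γ ε r x : ℝ} (hγ0 : 0 < γ) (hγ : γ ≤ 1/3) (hε0 : 0 < ε) (hε1 : ε ≤ 1)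
  (hr0 : 0 < r) (hrε : r < ε) (hx0 : 0 ≤ x) (hx1 : x ≤ 1)

include hγ0 hγ hε0 hε1 hr0 hrε hx0 hx1 in
lemma h_bounds :
    r * ε ^ 4 / (ε ^ 4 + r ^ 2) ^ 2 - 4 ≤ (1/r) * (urho γ ε r x * Real.sin (fe ε r)) ^ 2
    ∧ (1/r) * (urho γ ε r x * Real.sin (fe ε r)) ^ 2
        ≤ r * ε ^ 4 / (ε ^ 4 + r ^ 2) ^ 2 + 4
          + 8 * ε ^ γ * (1 / ε ^ 2 + 1) ^ (γ/2) * r ^ (γ/2 - 1)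
          + 6 * r ^ (-(1:ℝ)/3) := by
  set s := Real.sin (fe ε r) with hs_def
  set c := Real.cos (fe ε r) with hc_def
  set d := fder ε r with hd_def
  have hs : 0 < s := sin_fe_pos hε0 hr0 hrε.le
  have hs1 : s ≤ 1 := Real.sin_le_one _
  have hc : 0 ≤ c := cos_fe_nonneg hε0 hr0 hrε.le
  have hc1 : c ≤ 1 := Real.cos_le_one _
  have hd : 1/2 ≤ d := fder_ge hε0 hε1
  have hd0 : 0 < d := by linarith
  have heγ : 0 < ε ^ γ := Real.rpow_pos_of_pos hε0 γ
  set A := c + 2 * ε ^ γ with hA_def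
  have hA0 : 0 ≤ A := by positivity
  have hcA : c ≤ A := by simp only [hA_def]; linarith
  set B := 3 * x * r / (s * d) with hB_def
  have hB0 : 0 ≤ B := by positivity
  set z := A ^ 3 + B with hz_def
  have hz0 : 0 ≤ z := by positivity
  -- urho squared
  have hu2 : urho γ ε r x ^ 2 = z ^ ((2:ℝ)/3) := by
    rw [urho, ← hs_def, ← hc_def, ← hd_def, ← hA_def, ← hB_def, ← hz_def,
      ← Real.rpow_natCast (z ^ ((1:ℝ)/3)) 2, ← Real.rpow_mul hz0]
    norm_num
  have hmain : (1/r) * (urho γ ε r x * s) ^ 2 = s^2 * (1/r) * z ^ ((2:ℝ)/3) := by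
    rw [mul_pow, hu2]; ring
  -- trig comparison with pure arctan
  set a := Real.arctan (r / ε ^ 2) with ha_def
  have hlip : |s ^ 2 * c ^ 2 - Real.sin a ^ 2 * Real.cos a ^ 2| ≤ 4 * r := by
    have h1 := prod_sq_lip (fe ε r) a
    have h2 := fe_sub_arctan (ε := ε) (r := r) hε0 hr0
    obtain ⟨h2a, h2b⟩ := h2
    have : |fe ε r - a| ≤ r := by rw [abs_of_nonneg h2a]; exact h2b
    calc |s ^ 2 * c ^ 2 - Real.sin a ^ 2 * Real.cos a ^ 2| ≤ 4 * |fe ε r - a| := h1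
      _ ≤ 4 * r := by linarith
  have hphi := phi_eq_trig (ε := ε) (r := r) hε0 hr0
  rw [← ha_def] at hphi
  have habs := abs_le.mp hlip
  -- lower bound chain
  constructor
  · have h1 : c ^ 3 ≤ z := by
      have : c ^ 3 ≤ A ^ 3 := pow_le_pow_left₀ hc hcA 3
      simp only [hz_def]; linarith
    have h2 : c ^ 2 ≤ z ^ ((2:ℝ)/3) := by
      rw [← pow3_rpow hc]
      exact Real.rpow_le_rpow (by positivity) h1 (by norm_num)
    have h3 : s^2 * c^2 * (1/r) ≤ s^2 * (1/r) * z ^ ((2:ℝ)/3) := by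
      have := mul_le_mul_of_nonneg_left h2 (le_of_lt (by positivity : (0:ℝ) < s^2 * (1/r)))
      calc s^2 * c^2 * (1/r) = s^2 * (1/r) * c^2 := by ring
        _ ≤ s^2 * (1/r) * z ^ ((2:ℝ)/3) := this
    have h4 : Real.sin a ^ 2 * Real.cos a ^ 2 - 4 * r ≤ s^2 * c^2 := by linarith
    have h5 : r * ε ^ 4 / (ε ^ 4 + r ^ 2) ^ 2 - 4 ≤ s^2 * c^2 * (1/r) := by
      rw [← hphi]
      have h5' : (Real.sin a ^ 2 * Real.cos a ^ 2 - 4*r)/r ≤ (s^2*c^2)/r := by gcongr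
      calc Real.sin a^2 * Real.cos a^2/r - 4 = (Real.sin a^2*Real.cos a^2 - 4*r)/r := by
            field_simp
        _ ≤ (s^2*c^2)/r := h5'
        _ = s^2*c^2*(1/r) := by ring
    rw [hmain]
    linarith
  · -- upper bound
    have hB1 : B ≤ 6 * r / s := by
      rw [hB_def]
      have h1 : 3 * x * r ≤ 3 * r := by nlinarith
      have h2 : s * (1/2) ≤ s * d := by
        apply mul_le_mul_of_nonneg_left hd hs.le
      calc 3 * x * r / (s * d) ≤ 3 * r / (s * d) := by
            apply div_le_div_of_nonneg_right h1 (by positivity) |>.trans_eq rfl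
        _ ≤ 3 * r / (s * (1/2)) := by
            apply div_le_div_of_nonneg_left (by positivity) (by positivity) h2
        _ = 6 * r / s := by field_simp; ring
    have hz23 : z ^ ((2:ℝ)/3) ≤ A ^ 2 + (6 * r / s) ^ ((2:ℝ)/3) := by
      have step1 : z ^ ((2:ℝ)/3) ≤ (A ^ 3 + 6 * r / s) ^ ((2:ℝ)/3) := by
        apply Real.rpow_le_rpow hz0 _ (by norm_num)
        simp only [hz_def]; linarith
      have step2 : (A ^ 3 + 6 * r / s) ^ ((2:ℝ)/3)
          ≤ (A ^ 3) ^ ((2:ℝ)/3) + (6 * r / s) ^ ((2:ℝ)/3) :=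
        my_rpow_subadd (by positivity) (by positivity) (by norm_num) (by norm_num)
      rw [pow3_rpow hA0] at step2
      linarith
    have hA2 : A ^ 2 ≤ c ^ 2 + 8 * ε ^ γ := by
      have hee : ε ^ (2*γ) ≤ ε ^ γ := Real.rpow_le_rpow_of_exponent_ge hε0 hε1 (by linarith)
      have he2 : (ε ^ γ) ^ 2 = ε ^ (2*γ) := by
        rw [← Real.rpow_natCast (ε ^ γ) 2, ← Real.rpow_mul hε0.le]
        norm_num; ring_nf
      have : A ^ 2 = c^2 + 4 * ε ^ γ * c + 4 * (ε ^ γ)^2 := by rw [hA_def]; ring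
      rw [this, he2]
      nlinarith
    -- term B bound : s^2 * (1/r) ≤ (1/ε^2+1)^(γ/2) * r^(γ/2 - 1)
    have htermB : s ^ 2 * (1/r) ≤ (1 / ε ^ 2 + 1) ^ (γ/2) * r ^ (γ/2 - 1) := by
      have e1 : s ^ 2 = s ^ ((2:ℝ)) := by rw [← Real.rpow_natCast s 2]; norm_num
      have h1 : s ^ ((2:ℝ)) ≤ s ^ (γ/2) :=
        Real.rpow_le_rpow_of_exponent_ge hs hs1 (by linarith)
      have h2 : s ^ (γ/2) ≤ (r * (1 / ε ^ 2 + 1)) ^ (γ/2) :=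
        Real.rpow_le_rpow hs.le (sin_fe_le hε0 hε1 hr0) (by positivity)
      have h3 : (r * (1 / ε ^ 2 + 1)) ^ (γ/2) = r ^ (γ/2) * (1 / ε ^ 2 + 1) ^ (γ/2) :=
        Real.mul_rpow hr0.le (by positivity)
      have h4 : r ^ (γ/2) * (1/r) = r ^ (γ/2 - 1) := by
        rw [one_div, ← Real.rpow_neg_one r, ← Real.rpow_add hr0]
        norm_num
        ring_nf
      calc s ^ 2 * (1/r) = s ^ ((2:ℝ)) * (1/r) := by rw [e1]
        _ ≤ (r ^ (γ/2) * (1 / ε ^ 2 + 1) ^ (γ/2)) * (1/r) := by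
            apply mul_le_mul_of_nonneg_right _ (by positivity)
            rw [← h3]; exact h1.trans h2
        _ = (1 / ε ^ 2 + 1) ^ (γ/2) * (r ^ (γ/2) * (1/r)) := by ring
        _ = (1 / ε ^ 2 + 1) ^ (γ/2) * r ^ (γ/2 - 1) := by rw [h4]
    -- term C bound : s^2 * (1/r) * (6r/s)^(2/3) ≤ 6 * r^(-1/3)
    have htermC : s ^ 2 * (1/r) * (6 * r / s) ^ ((2:ℝ)/3) ≤ 6 * r ^ (-(1:ℝ)/3) := by
      have e1 : (6 * r / s) ^ ((2:ℝ)/3)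
          = (6:ℝ) ^ ((2:ℝ)/3) * r ^ ((2:ℝ)/3) * (s ^ ((2:ℝ)/3))⁻¹ := by
        rw [div_eq_mul_inv, Real.mul_rpow (by positivity) (by positivity),
          Real.mul_rpow (by norm_num) hr0.le, Real.inv_rpow hs.le]
      have e2 : s ^ 2 * (s ^ ((2:ℝ)/3))⁻¹ = s ^ ((4:ℝ)/3) := by
        rw [← Real.rpow_natCast s 2, ← Real.rpow_neg hs.le, ← Real.rpow_add hs]
        norm_num
      have e3 : (1/r) * r ^ ((2:ℝ)/3) = r ^ (-(1:ℝ)/3) := by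
        rw [one_div, ← Real.rpow_neg_one r, ← Real.rpow_add hr0]
        norm_num
      have h6 : (6:ℝ) ^ ((2:ℝ)/3) ≤ 6 := by
        calc (6:ℝ) ^ ((2:ℝ)/3) ≤ (6:ℝ) ^ ((1:ℝ)) :=
              Real.rpow_le_rpow_of_exponent_le (by norm_num) (by norm_num)
          _ = 6 := Real.rpow_one 6
      have h7 : s ^ ((4:ℝ)/3) ≤ 1 := Real.rpow_le_one hs.le hs1 (by norm_num)
      calc s ^ 2 * (1/r) * (6 * r / s) ^ ((2:ℝ)/3)
          = (6:ℝ) ^ ((2:ℝ)/3) * (s ^ 2 * (s ^ ((2:ℝ)/3))⁻¹) * ((1/r) * r ^ ((2:ℝ)/3)) := by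
            rw [e1]; ring
        _ = (6:ℝ) ^ ((2:ℝ)/3) * s ^ ((4:ℝ)/3) * r ^ (-(1:ℝ)/3) := by rw [e2, e3]
        _ ≤ 6 * 1 * r ^ (-(1:ℝ)/3) := by
            apply mul_le_mul_of_nonneg_right _ (by positivity)
            apply mul_le_mul h6 h7 (by positivity) (by norm_num)
        _ = 6 * r ^ (-(1:ℝ)/3) := by ring
    -- assemble
    have hup : s^2 * (1/r) * z ^ ((2:ℝ)/3)
        ≤ s^2 * c^2 * (1/r) + 8 * ε ^ γ * (s^2 * (1/r))
          + s ^ 2 * (1/r) * (6 * r / s) ^ ((2:ℝ)/3) := by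
      have h1 : s^2 * (1/r) * z ^ ((2:ℝ)/3)
          ≤ s^2 * (1/r) * (c ^ 2 + 8 * ε ^ γ + (6 * r / s) ^ ((2:ℝ)/3)) := by
        apply mul_le_mul_of_nonneg_left _ (by positivity)
        calc z ^ ((2:ℝ)/3) ≤ A ^ 2 + (6 * r / s) ^ ((2:ℝ)/3) := hz23
          _ ≤ c ^ 2 + 8 * ε ^ γ + (6 * r / s) ^ ((2:ℝ)/3) := add_le_add_left hA2 _
      calc s^2 * (1/r) * z ^ ((2:ℝ)/3)
          ≤ s^2 * (1/r) * (c ^ 2 + 8 * ε ^ γ + (6 * r / s) ^ ((2:ℝ)/3)) := h1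
        _ = s^2 * c^2 * (1/r) + 8 * ε ^ γ * (s^2 * (1/r))
            + s ^ 2 * (1/r) * (6 * r / s) ^ ((2:ℝ)/3) := by ring
    have hterm1 : s^2 * c^2 * (1/r) ≤ r * ε ^ 4 / (ε ^ 4 + r ^ 2) ^ 2 + 4 := by
      rw [← hphi]
      have : s^2*c^2*(1/r) = (s^2*c^2)/r := by ring
      rw [this, div_add' _ _ _ hr0.ne', div_le_div_iff_of_pos_right hr0]
      linarith
    have htermB' : 8 * ε ^ γ * (s^2 * (1/r))
        ≤ 8 * ε ^ γ * (1 / ε ^ 2 + 1) ^ (γ/2) * r ^ (γ/2 - 1) := by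
      calc 8 * ε ^ γ * (s^2 * (1/r))
          ≤ 8 * ε ^ γ * ((1 / ε ^ 2 + 1) ^ (γ/2) * r ^ (γ/2 - 1)) :=
            mul_le_mul_of_nonneg_left htermB (by positivity)
        _ = 8 * ε ^ γ * (1 / ε ^ 2 + 1) ^ (γ/2) * r ^ (γ/2 - 1) := by ring
    rw [hmain]
    linarith

end Pointwise



lemma meas_H (γ ε : ℝ) :
    Measurable (fun p : ℝ × ℝ => (1 / p.2) * (urho γ ε p.2 p.1 * Real.sin (fe ε p.2)) ^ 2) := by
  unfold urho fe fder
  have h1 : Measurable (fun p : ℝ × ℝ =>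
      Real.arctan (p.2 / ε ^ 2) + Real.arctan ε * p.2 / ε) := by
    apply Measurable.add
    · exact Real.measurable_arctan.comp (by fun_prop)
    · fun_prop
  have h2 : Measurable (fun p : ℝ × ℝ =>
      (Real.cos (Real.arctan (p.2 / ε ^ 2) + Real.arctan ε * p.2 / ε) + 2 * ε ^ γ) ^ 3
      + 3 * p.1 * p.2 /
        (Real.sin (Real.arctan (p.2 / ε ^ 2) + Real.arctan ε * p.2 / ε)
          * (ε ^ 2 / (ε ^ 4 + p.2 ^ 2) + Real.arctan ε / ε))) := by
    apply Measurable.add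
    · exact ((Real.measurable_cos.comp h1).add measurable_const).pow_const 3
    · exact (measurable_fst.const_mul 3 |>.mul measurable_snd).div
        ((Real.measurable_sin.comp h1).mul (by fun_prop))
  have h3 : Measurable (fun p : ℝ × ℝ =>
      ((Real.cos (Real.arctan (p.2 / ε ^ 2) + Real.arctan ε * p.2 / ε) + 2 * ε ^ γ) ^ 3
      + 3 * p.1 * p.2 /
        (Real.sin (Real.arctan (p.2 / ε ^ 2) + Real.arctan ε * p.2 / ε)
          * (ε ^ 2 / (ε ^ 4 + p.2 ^ 2) + Real.arctan ε / ε))) ^ ((1:ℝ)/3)) :=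
    by
      have hc : Continuous (fun z : ℝ => z ^ ((1:ℝ)/3)) :=
        continuous_iff_continuousAt.2 fun x =>
          Real.continuousAt_rpow_const x _ (Or.inr (by norm_num))
      exact hc.measurable.comp h2
  exact (measurable_const.div measurable_snd).mul
    ((h3.mul (Real.measurable_sin.comp h1)).pow_const 2)




section Inner
variable {γ ε : ℝ} (hγ0 : 0 < γ) (hγ : γ ≤ 1/3) (hε0 : 0 < ε) (hε1 : ε < 1)

include hγ0 hγ hε0 hε1 in
lemma integrable_h {x : ℝ} (hx : x ∈ Set.Ioo (0:ℝ) 1) :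
    IntegrableOn (fun r => (1/r) * (urho γ ε r x * Real.sin (fe ε r)) ^ 2)
      (Set.Ioo (0:ℝ) ε) := by
  have hG : IntegrableOn (fun r : ℝ =>
      r * ε ^ 4 / (ε ^ 4 + r ^ 2) ^ 2 + 4
        + 8 * ε ^ γ * (1 / ε ^ 2 + 1) ^ (γ/2) * r ^ (γ/2 - 1)
        + 6 * r ^ (-(1:ℝ)/3)) (Set.Ioo (0:ℝ) ε) := by
    apply Integrable.add
    apply Integrable.add
    apply Integrable.add
    · exact (phi_cont ε hε0).integrableOn_Icc.mono_set Set.Ioo_subset_Icc_self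
    · exact integrableOn_const (by rw [Real.volume_Ioo]; exact ENNReal.ofReal_ne_top)
    · exact (integrable_rpow_Ioo (by linarith) hε0).const_mul _
    · exact (integrable_rpow_Ioo (by norm_num) hε0).const_mul _
  apply Integrable.mono' hG
  · exact ((meas_H γ ε).comp (measurable_const.prodMk measurable_id)).aestronglyMeasurable
  · rw [ae_restrict_iff' measurableSet_Ioo]
    filter_upwards with r hr
    obtain ⟨hr0, hrε⟩ := hr
    obtain ⟨hx0, hx1⟩ := hx
    have hb := h_bounds hγ0 hγ hε0 hε1.le hr0 hrε hx0.le hx1.le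
    have hpos : 0 ≤ (1/r) * (urho γ ε r x * Real.sin (fe ε r)) ^ 2 := by positivity
    rw [Real.norm_eq_abs, abs_of_nonneg hpos]
    exact hb.2

include hγ0 hγ hε0 hε1 in
lemma inner_bounds {x : ℝ} (hx : x ∈ Set.Ioo (0:ℝ) 1) :
    (1 / 2 - ε ^ 2 / (2 * (ε ^ 2 + 1)) - 4 * ε
        ≤ ∫ r in Set.Ioo (0:ℝ) ε, (1/r) * (urho γ ε r x * Real.sin (fe ε r)) ^ 2)
    ∧ (∫ r in Set.Ioo (0:ℝ) ε, (1/r) * (urho γ ε r x * Real.sin (fe ε r)) ^ 2)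
        ≤ 1 / 2 - ε ^ 2 / (2 * (ε ^ 2 + 1)) + 4 * ε
          + 8 * ε ^ γ * (1 / ε ^ 2 + 1) ^ (γ/2) * (ε ^ (γ/2) / (γ/2))
          + 6 * (ε ^ ((2:ℝ)/3) / (2/3)) := by
  obtain ⟨hx0, hx1⟩ := hx
  have hIh := integrable_h hγ0 hγ hε0 hε1 ⟨hx0, hx1⟩
  have hvol : volume.real (Set.Ioo (0:ℝ) ε) = ε := by
    rw [measureReal_def, Real.volume_Ioo, ENNReal.toReal_ofReal (by linarith)]; ring
  have hIφ : IntegrableOn (fun r : ℝ => r * ε ^ 4 / (ε ^ 4 + r ^ 2) ^ 2)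
      (Set.Ioo (0:ℝ) ε) :=
    (phi_cont ε hε0).integrableOn_Icc.mono_set Set.Ioo_subset_Icc_self
  have hIconst : IntegrableOn (fun _ : ℝ => (4:ℝ)) (Set.Ioo (0:ℝ) ε) :=
    integrableOn_const (by rw [Real.volume_Ioo]; exact ENNReal.ofReal_ne_top)
  constructor
  · have hmono : ∫ r in Set.Ioo (0:ℝ) ε, (r * ε ^ 4 / (ε ^ 4 + r ^ 2) ^ 2 - 4)
        ≤ ∫ r in Set.Ioo (0:ℝ) ε, (1/r) * (urho γ ε r x * Real.sin (fe ε r)) ^ 2 := by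
      apply setIntegral_mono_on (hIφ.sub hIconst) hIh measurableSet_Ioo
      intro r hr
      exact (h_bounds hγ0 hγ hε0 hε1.le hr.1 hr.2 hx0.le hx1.le).1
    rw [integral_sub hIφ hIconst, integral_phi ε hε0, setIntegral_const, hvol] at hmono
    simp only [smul_eq_mul] at hmono
    linarith
  · have hIr1 : IntegrableOn (fun r : ℝ =>
        8 * ε ^ γ * (1 / ε ^ 2 + 1) ^ (γ/2) * r ^ (γ/2 - 1)) (Set.Ioo (0:ℝ) ε) :=
      (integrable_rpow_Ioo (by linarith) hε0).const_mul _
    have hIr2 : IntegrableOn (fun r : ℝ => 6 * r ^ (-(1:ℝ)/3)) (Set.Ioo (0:ℝ) ε) :=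
      (integrable_rpow_Ioo (by norm_num) hε0).const_mul _
    have hI12 : IntegrableOn (fun r : ℝ => r * ε ^ 4 / (ε ^ 4 + r ^ 2) ^ 2 + 4)
        (Set.Ioo (0:ℝ) ε) := hIφ.add hIconst
    have hI123 : IntegrableOn (fun r : ℝ => r * ε ^ 4 / (ε ^ 4 + r ^ 2) ^ 2 + 4
        + 8 * ε ^ γ * (1 / ε ^ 2 + 1) ^ (γ/2) * r ^ (γ/2 - 1)) (Set.Ioo (0:ℝ) ε) :=
      hI12.add hIr1
    have hI1234 : IntegrableOn (fun r : ℝ => r * ε ^ 4 / (ε ^ 4 + r ^ 2) ^ 2 + 4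
        + 8 * ε ^ γ * (1 / ε ^ 2 + 1) ^ (γ/2) * r ^ (γ/2 - 1)
        + 6 * r ^ (-(1:ℝ)/3)) (Set.Ioo (0:ℝ) ε) := hI123.add hIr2
    have hmono : (∫ r in Set.Ioo (0:ℝ) ε, (1/r) * (urho γ ε r x * Real.sin (fe ε r)) ^ 2)
        ≤ ∫ r in Set.Ioo (0:ℝ) ε, (r * ε ^ 4 / (ε ^ 4 + r ^ 2) ^ 2 + 4
            + 8 * ε ^ γ * (1 / ε ^ 2 + 1) ^ (γ/2) * r ^ (γ/2 - 1)
            + 6 * r ^ (-(1:ℝ)/3)) := by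
      apply setIntegral_mono_on hIh hI1234 measurableSet_Ioo
      intro r hr
      exact (h_bounds hγ0 hγ hε0 hε1.le hr.1 hr.2 hx0.le hx1.le).2
    rw [integral_add hI123 hIr2, integral_add hI12 hIr1, integral_add hIφ hIconst,
      integral_phi ε hε0, setIntegral_const, hvol] at hmono
    rw [MeasureTheory.integral_const_mul, MeasureTheory.integral_const_mul, integral_rpow_Ioo (by linarith) hε0,
      integral_rpow_Ioo (by norm_num) hε0] at hmono
    have e1 : γ/2 - 1 + 1 = γ/2 := by ring
    have e2 : -(1:ℝ)/3 + 1 = 2/3 := by norm_num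
    rw [e1, e2] at hmono
    calc (∫ r in Set.Ioo (0:ℝ) ε, (1/r) * (urho γ ε r x * Real.sin (fe ε r)) ^ 2)
        ≤ _ := hmono
      _ = 1 / 2 - ε ^ 2 / (2 * (ε ^ 2 + 1)) + 4 * ε
          + 8 * ε ^ γ * (1 / ε ^ 2 + 1) ^ (γ/2) * (ε ^ (γ/2) / (γ/2))
          + 6 * (ε ^ ((2:ℝ)/3) / (2/3)) := by
        simp only [smul_eq_mul]
        ring
end Inner

/-- for `0 < γ ≤ 1/3`,
`lim_{ε→0⁺} ∫₀¹ ∫₀^ε (1/r)·(u_ρ^ε(r,x₃)·sin f_ε(r))² dr dx₃ = 1/2`. -/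
theorem energy_part_II (γ : ℝ) (hγ0 : 0 < γ) (hγ : γ ≤ 1 / 3) :
    Tendsto (fun ε : ℝ =>
        ∫ x in Set.Ioo (0 : ℝ) 1, ∫ r in Set.Ioo (0 : ℝ) ε,
          (1 / r) * (urho γ ε r x * Real.sin (fe ε r)) ^ 2)
      (𝓝[>] 0) (𝓝 (1 / 2)) := by
  have hev : Set.Ioo (0:ℝ) 1 ∈ 𝓝[>] (0:ℝ) :=
    Ioo_mem_nhdsGT_of_mem (by norm_num : (0:ℝ) ∈ Set.Ico 0 1)
  -- the sandwich bounds
  have main : ∀ ε : ℝ, ε ∈ Set.Ioo (0:ℝ) 1 →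
      (1 / 2 - ε ^ 2 / (2 * (ε ^ 2 + 1)) - 4 * ε
        ≤ ∫ x in Set.Ioo (0 : ℝ) 1, ∫ r in Set.Ioo (0 : ℝ) ε,
            (1 / r) * (urho γ ε r x * Real.sin (fe ε r)) ^ 2)
      ∧ (∫ x in Set.Ioo (0 : ℝ) 1, ∫ r in Set.Ioo (0 : ℝ) ε,
            (1 / r) * (urho γ ε r x * Real.sin (fe ε r)) ^ 2)
          ≤ 1 / 2 - ε ^ 2 / (2 * (ε ^ 2 + 1)) + 4 * ε
            + 8 * ε ^ γ * (1 / ε ^ 2 + 1) ^ (γ/2) * (ε ^ (γ/2) / (γ/2))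
            + 6 * (ε ^ ((2:ℝ)/3) / (2/3)) := by
    intro ε hε
    obtain ⟨hε0, hε1⟩ := hε
    have innerSM : StronglyMeasurable (fun x : ℝ =>
        ∫ r in Set.Ioo (0:ℝ) ε, (1/r) * (urho γ ε r x * Real.sin (fe ε r)) ^ 2) := by
      have := (meas_H γ ε).stronglyMeasurable.integral_prod_right'
        (ν := volume.restrict (Set.Ioo (0:ℝ) ε))
      simpa using this
    have hnn : ∀ x : ℝ, 0 ≤ ∫ r in Set.Ioo (0:ℝ) ε,
        (1/r) * (urho γ ε r x * Real.sin (fe ε r)) ^ 2 := fun x =>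
      setIntegral_nonneg measurableSet_Ioo (fun r hr => by
        have : 0 < r := hr.1
        positivity)
    have hvol1 : volume.real (Set.Ioo (0:ℝ) 1) = 1 := by
      rw [measureReal_def, Real.volume_Ioo, ENNReal.toReal_ofReal (by norm_num)]; norm_num
    set UB : ℝ := 1 / 2 - ε ^ 2 / (2 * (ε ^ 2 + 1)) + 4 * ε
        + 8 * ε ^ γ * (1 / ε ^ 2 + 1) ^ (γ/2) * (ε ^ (γ/2) / (γ/2))
        + 6 * (ε ^ ((2:ℝ)/3) / (2/3)) with hUB_def
    set LB : ℝ := 1 / 2 - ε ^ 2 / (2 * (ε ^ 2 + 1)) - 4 * ε with hLB_def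
    have hint : IntegrableOn (fun x : ℝ =>
        ∫ r in Set.Ioo (0:ℝ) ε, (1/r) * (urho γ ε r x * Real.sin (fe ε r)) ^ 2)
        (Set.Ioo (0:ℝ) 1) := by
      apply Integrable.mono' (integrable_const UB) innerSM.aestronglyMeasurable.restrict
      rw [ae_restrict_iff' measurableSet_Ioo]
      filter_upwards with x hx
      rw [Real.norm_eq_abs, abs_of_nonneg (hnn x)]
      exact (inner_bounds hγ0 hγ hε0 hε1 hx).2
    constructor
    · calc LB = ∫ _x in Set.Ioo (0:ℝ) 1, LB := by
            rw [setIntegral_const, hvol1, one_smul]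
        _ ≤ _ := setIntegral_mono_on (integrable_const LB) hint measurableSet_Ioo
            (fun x hx => (inner_bounds hγ0 hγ hε0 hε1 hx).1)
    · calc (∫ x in Set.Ioo (0 : ℝ) 1, ∫ r in Set.Ioo (0 : ℝ) ε,
            (1 / r) * (urho γ ε r x * Real.sin (fe ε r)) ^ 2)
          ≤ ∫ _x in Set.Ioo (0:ℝ) 1, UB := setIntegral_mono_on hint (integrable_const UB)
            measurableSet_Ioo (fun x hx => (inner_bounds hγ0 hγ hε0 hε1 hx).2)
        _ = UB := by rw [setIntegral_const, hvol1, one_smul]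
  -- limits of the bounding functions
  have hKlim : Tendsto (fun ε : ℝ => ε ^ 2 / (2 * (ε ^ 2 + 1))) (𝓝 0) (𝓝 0) := by
    have hc : ContinuousAt (fun ε : ℝ => ε ^ 2 / (2 * (ε ^ 2 + 1))) 0 :=
      ContinuousAt.div (by fun_prop) (by fun_prop) (by norm_num)
    have := hc.tendsto
    norm_num at this
    exact this
  have hεlim : Tendsto (fun ε : ℝ => ε) (𝓝 (0:ℝ)) (𝓝 0) := tendsto_id
  have hrpow : ∀ q : ℝ, 0 < q → Tendsto (fun ε : ℝ => ε ^ q) (𝓝 0) (𝓝 0) := by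
    intro q hq
    have hc : ContinuousAt (fun y : ℝ => y ^ q) 0 :=
      Real.continuousAt_rpow_const 0 q (Or.inr hq.le)
    have := hc.tendsto
    rwa [Real.zero_rpow hq.ne'] at this
  have hlo : Tendsto (fun ε : ℝ => 1 / 2 - ε ^ 2 / (2 * (ε ^ 2 + 1)) - 4 * ε)
      (𝓝[>] (0:ℝ)) (𝓝 (1/2)) := by
    have : Tendsto (fun ε : ℝ => 1 / 2 - ε ^ 2 / (2 * (ε ^ 2 + 1)) - 4 * ε)
        (𝓝 (0:ℝ)) (𝓝 (1/2 - 0 - 4 * 0)) :=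
      (tendsto_const_nhds.sub hKlim).sub (tendsto_const_nhds.mul hεlim)
    norm_num at this
    exact this.mono_left nhdsWithin_le_nhds
  have hhi : Tendsto (fun ε : ℝ => 1 / 2 - ε ^ 2 / (2 * (ε ^ 2 + 1)) + 4 * ε
      + 8 * ε ^ γ * (1 / ε ^ 2 + 1) ^ (γ/2) * (ε ^ (γ/2) / (γ/2))
      + 6 * (ε ^ ((2:ℝ)/3) / (2/3))) (𝓝[>] (0:ℝ)) (𝓝 (1/2)) := by
    -- rewrite the middle term on the filter
    have hEq : (fun ε : ℝ => 1 / 2 - ε ^ 2 / (2 * (ε ^ 2 + 1)) + 4 * ε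
        + 8 * ε ^ γ * (1 / ε ^ 2 + 1) ^ (γ/2) * (ε ^ (γ/2) / (γ/2))
        + 6 * (ε ^ ((2:ℝ)/3) / (2/3)))
        =ᶠ[𝓝[>] (0:ℝ)] (fun ε : ℝ => 1 / 2 - ε ^ 2 / (2 * (ε ^ 2 + 1)) + 4 * ε
        + (16/γ) * ((ε ^ 2 + 1) ^ (γ/2) * ε ^ (γ/2))
        + 9 * ε ^ ((2:ℝ)/3)) := by
      filter_upwards [self_mem_nhdsWithin] with ε (hε0 : (0:ℝ) < ε)
      have e0 : ε ^ γ = (ε ^ 2) ^ (γ/2) := by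
        rw [← Real.rpow_natCast ε 2, ← Real.rpow_mul hε0.le]
        norm_num
        congr 1
        ring
      have key : ε ^ γ * (1 / ε ^ 2 + 1) ^ (γ/2) = (ε ^ 2 + 1) ^ (γ/2) := by
        rw [e0, ← Real.mul_rpow (by positivity) (by positivity)]
        congr 1
        field_simp
        ring
      have hγne : γ ≠ 0 := hγ0.ne'
      have lhs_eq : 8 * ε ^ γ * (1 / ε ^ 2 + 1) ^ (γ/2) * (ε ^ (γ/2) / (γ/2))
          = (16/γ) * ((ε ^ 2 + 1) ^ (γ/2) * ε ^ (γ/2)) := by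
        rw [show 8 * ε ^ γ * (1 / ε ^ 2 + 1) ^ (γ/2) * (ε ^ (γ/2) / (γ/2))
          = 8 * (ε ^ γ * (1 / ε ^ 2 + 1) ^ (γ/2)) * (ε ^ (γ/2) / (γ/2)) by ring, key]
        field_simp
        ring
      rw [lhs_eq]
      ring
    rw [tendsto_congr' hEq]
    have t1 : Tendsto (fun ε : ℝ => (ε ^ 2 + 1) ^ (γ/2)) (𝓝 0) (𝓝 1) := by
      have hb : Tendsto (fun ε : ℝ => ε ^ 2 + 1) (𝓝 (0:ℝ)) (𝓝 1) := by
        have : Tendsto (fun ε : ℝ => ε ^ 2 + 1) (𝓝 (0:ℝ)) (𝓝 ((0:ℝ)^2 + 1)) :=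
          ((continuous_pow 2).add continuous_const).tendsto 0
        norm_num at this
        exact this
      have hc : ContinuousAt (fun y : ℝ => y ^ (γ/2)) 1 :=
        Real.continuousAt_rpow_const 1 _ (Or.inl one_ne_zero)
      have := hc.tendsto.comp hb
      rwa [Real.one_rpow] at this
    have tmid : Tendsto (fun ε : ℝ => (16/γ) * ((ε ^ 2 + 1) ^ (γ/2) * ε ^ (γ/2)))
        (𝓝 (0:ℝ)) (𝓝 0) := by
      have := tendsto_const_nhds (x := (16/γ)) (f := 𝓝 (0:ℝ)) |>.mul
        (t1.mul (hrpow (γ/2) (by linarith)))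
      norm_num at this
      exact this
    have tlast : Tendsto (fun ε : ℝ => 9 * ε ^ ((2:ℝ)/3)) (𝓝 (0:ℝ)) (𝓝 0) := by
      have := tendsto_const_nhds (x := (9:ℝ)) (f := 𝓝 (0:ℝ)) |>.mul (hrpow (2/3) (by norm_num))
      norm_num at this
      exact this
    have : Tendsto (fun ε : ℝ => 1 / 2 - ε ^ 2 / (2 * (ε ^ 2 + 1)) + 4 * ε
        + (16/γ) * ((ε ^ 2 + 1) ^ (γ/2) * ε ^ (γ/2)) + 9 * ε ^ ((2:ℝ)/3))
        (𝓝 (0:ℝ)) (𝓝 (1/2 - 0 + 4*0 + 0 + 0)) :=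
      (((tendsto_const_nhds.sub hKlim).add (tendsto_const_nhds.mul hεlim)).add tmid).add tlast
    norm_num at this
    exact this.mono_left nhdsWithin_le_nhds
  apply tendsto_of_tendsto_of_tendsto_of_le_of_le' hlo hhi
  · filter_upwards [hev] with ε hε
    exact (main ε hε).1
  · filter_upwards [hev] with ε hε
    exact (main ε hε).2
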